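/- Let H be a real Hilbert space and S a subspace of H. Let M : H → H be a continuous self-adjoint linear operator satisfying ⟨Mx, x⟩ ≥ c‖x‖² for some c > 0 (hence M is invertible), let D₁, …, D_m : H → H be continuous self-adjoint positive-semidefinite linear operators, and let λ₁, …, λ_m > 0. Suppose x : [0,T] → S is continuous, g : [0,T] → H is continuous, and y₁, …, y_m : [0,T] → S are continuously differentiable and satisfy: (i) ⟨M x(t) + Σ_{k=1}^m D_k y_k(t) − g(t), z⟩ = 0 for every z ∈ S and every t ∈ [0,T]; (ii) y_k′(t) + λ_k y_k(t) = x(t) for every t ∈ [0,T] and k = 1,…,m; (iii) y_k(0) = 0 for k = 1,…,m. Then ∫₀ᵀ ⟨M x(t), x(t)⟩ dt + Σ_{k=1}^m ⟨D_k y_k(T), y_k(T)⟩ ≤ ∫₀ᵀ ⟨M⁻¹ g(t), g(t)⟩ dt. -/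

import Mathlib

open MeasureTheory Set

local notation "⟪" x ", " y "⟫" => @inner ℝ _ _ x y

/-- Abstract Hilbert-space form of Theorem 1 (a priori estimate for the localized
homogenized filtration problem with memory). -/
theorem a_priori_estimate_continuous
    {H : Type*} [NormedAddCommGroup H] [InnerProductSpace ℝ H] [CompleteSpace H]
    (S : Submodule ℝ H)
    (M Minv : H →L[ℝ] H)
    (hMsa : ∀ u v : H, ⟪M u, v⟫ = ⟪u, M v⟫)
    (c : ℝ) (hc : 0 < c)
    (hMcoer : ∀ u : H, c * ‖u‖ ^ 2 ≤ ⟪M u, u⟫)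
    (hMinv₁ : ∀ u : H, Minv (M u) = u)
    (hMinv₂ : ∀ u : H, M (Minv u) = u)
    (m : ℕ) (D : Fin m → H →L[ℝ] H)
    (hDsa : ∀ k, ∀ u v : H, ⟪D k u, v⟫ = ⟪u, D k v⟫)
    (hDpos : ∀ k, ∀ u : H, 0 ≤ ⟪D k u, u⟫)
    (lam : Fin m → ℝ) (hlam : ∀ k, 0 < lam k)
    (T : ℝ) (hT : 0 ≤ T)
    (x g : ℝ → H) (y y' : Fin m → ℝ → H)
    (hx_mem : ∀ t ∈ Icc (0:ℝ) T, x t ∈ S)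
    (hx_cont : ContinuousOn x (Icc 0 T))
    (hg_cont : ContinuousOn g (Icc 0 T))
    (hy_mem : ∀ k, ∀ t ∈ Icc (0:ℝ) T, y k t ∈ S)
    (hy_deriv : ∀ k, ∀ t ∈ Icc (0:ℝ) T, HasDerivAt (y k) (y' k t) t)
    (hy'_cont : ∀ k, ContinuousOn (y' k) (Icc 0 T))
    (hweak : ∀ t ∈ Icc (0:ℝ) T, ∀ z ∈ S,
      ⟪M (x t) + ∑ k, D k (y k t) - g t, z⟫ = 0)
    (hode : ∀ k, ∀ t ∈ Icc (0:ℝ) T, y' k t + lam k • y k t = x t)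
    (hinit : ∀ k, y k 0 = 0) :
    (∫ t in (0:ℝ)..T, ⟪M (x t), x t⟫) + ∑ k, ⟪D k (y k T), y k T⟫ ≤
      ∫ t in (0:ℝ)..T, ⟪Minv (g t), g t⟫ := by
  -- auxiliary: energy function and its derivative
  set F : ℝ → ℝ := fun t => ∑ k, ⟪D k (y k t), y k t⟫ with hF
  set F' : ℝ → ℝ := fun t => ∑ k, (⟪D k (y k t), y' k t⟫ + ⟪D k (y' k t), y k t⟫) with hF'
  have hMpos : ∀ u : H, 0 ≤ ⟪M u, u⟫ := fun u =>
    le_trans (by positivity) (hMcoer u)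
  have hy_cont : ∀ k, ContinuousOn (y k) (Icc 0 T) := fun k t ht =>
    (hy_deriv k t ht).continuousAt.continuousWithinAt
  have hFderiv : ∀ t ∈ Icc (0:ℝ) T, HasDerivAt F (F' t) t := by
    intro t ht
    apply HasDerivAt.fun_sum
    intro k _
    have hD : HasDerivAt (fun s => D k (y k s)) (D k (y' k t)) t :=
      (D k).hasFDerivAt.comp_hasDerivAt t (hy_deriv k t ht)
    exact hD.inner ℝ (hy_deriv k t ht)
  have hF'cont : ContinuousOn F' (Icc 0 T) := by
    apply continuousOn_finset_sum
    intro k _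
    exact (((D k).continuous.comp_continuousOn (hy_cont k)).inner (hy'_cont k)).add
      (((D k).continuous.comp_continuousOn (hy'_cont k)).inner (hy_cont k))
  -- pointwise inequality
  have hpt : ∀ t ∈ Icc (0:ℝ) T, ⟪M (x t), x t⟫ + F' t ≤ ⟪Minv (g t), g t⟫ := by
    intro t ht
    have h1 : ⟪M (x t), x t⟫ + ∑ k, ⟪D k (y k t), x t⟫ = ⟪g t, x t⟫ := by
      have := hweak t ht (x t) (hx_mem t ht)
      rw [inner_sub_left, inner_add_left, sum_inner] at this
      linarith
    have h2 : ∀ k, ⟪D k (y k t), y' k t⟫ + ⟪D k (y' k t), y k t⟫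
        ≤ 2 * ⟪D k (y k t), x t⟫ := by
      intro k
      have hx : x t = y' k t + lam k • y k t := (hode k t ht).symm
      have e1 : ⟪D k (y' k t), y k t⟫ = ⟪D k (y k t), y' k t⟫ := by
        rw [hDsa k, real_inner_comm]
      have e2 : ⟪D k (y k t), x t⟫
          = ⟪D k (y k t), y' k t⟫ + lam k * ⟪D k (y k t), y k t⟫ := by
        rw [hx, inner_add_right, real_inner_smul_right]
      have := mul_nonneg (hlam k).le (hDpos k (y k t))
      rw [e1, e2]; linarith
    have h3 : ⟪g t, x t⟫ ≤ (⟪M (x t), x t⟫ + ⟪Minv (g t), g t⟫) / 2 := by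
      set a := Minv (g t) with ha
      have key : (0:ℝ) ≤ ⟪M (a - x t), a - x t⟫ := hMpos _
      have ea : ⟪M a, a⟫ = ⟪Minv (g t), g t⟫ := by
        rw [← ha, hMinv₂, real_inner_comm]
      have eb : ⟪M a, x t⟫ = ⟪g t, x t⟫ := by rw [ha, hMinv₂]
      have ec : ⟪M (x t), a⟫ = ⟪g t, x t⟫ := by
        rw [hMsa, real_inner_comm, ← eb, hMsa]
      rw [map_sub, inner_sub_left, inner_sub_right, inner_sub_right, ea, eb, ec] at key
      linarith
    have hsum2 : F' t ≤ 2 * ∑ k, ⟪D k (y k t), x t⟫ := by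
      rw [hF', Finset.mul_sum]
      exact Finset.sum_le_sum fun k _ => h2 k
    linarith
  -- integrability
  have hxM_cont : ContinuousOn (fun t => ⟪M (x t), x t⟫) (Icc 0 T) :=
    (M.continuous.comp_continuousOn hx_cont).inner hx_cont
  have hgM_cont : ContinuousOn (fun t => ⟪Minv (g t), g t⟫) (Icc 0 T) :=
    (Minv.continuous.comp_continuousOn hg_cont).inner hg_cont
  have hI1 : IntervalIntegrable (fun t => ⟪M (x t), x t⟫) volume 0 T :=
    hxM_cont.intervalIntegrable_of_Icc hT
  have hI2 : IntervalIntegrable F' volume 0 T :=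
    hF'cont.intervalIntegrable_of_Icc hT
  have hI3 : IntervalIntegrable (fun t => ⟪Minv (g t), g t⟫) volume 0 T :=
    hgM_cont.intervalIntegrable_of_Icc hT
  -- FTC
  have hFTC : (∫ t in (0:ℝ)..T, F' t) = F T - F 0 := by
    apply intervalIntegral.integral_eq_sub_of_hasDerivAt
    · intro t ht
      rw [uIcc_of_le hT] at ht
      exact hFderiv t ht
    · exact hI2
  have hF0 : F 0 = 0 := by
    simp [hF, hinit]
  -- combine
  have hmono : (∫ t in (0:ℝ)..T, (⟪M (x t), x t⟫ + F' t))
      ≤ ∫ t in (0:ℝ)..T, ⟪Minv (g t), g t⟫ := by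
    apply intervalIntegral.integral_mono_on hT (hI1.add hI2) hI3
    exact hpt
  rw [intervalIntegral.integral_add hI1 hI2, hFTC, hF0] at hmono
  have hFT : F T = ∑ k, ⟪D k (y k T), y k T⟫ := rfl
  linarith
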